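/- Let W̃ be the 4×4 diagonal matrix diag(x,y,z,w). Then the determinant of the bottom-right 3×3 submatrix of (h^T⊗h^T)·W̃·(h⊗h), where h = (1/√2)[[1,1],[-1,1]], equals (1/4)(wyz + xyz + wxy + wxz). In particular, if x,y,z,w > 0 this quantity is strictly positive. -/

import Mathlib

open Matrix

noncomputable def h : Matrix (Fin 2) (Fin 2) ℝ :=
  (Real.sqrt 2)⁻¹ • !![1, 1; -1, 1]

def fst4 (k : Fin 4) : Fin 2 := ⟨k.val / 2, by omega⟩
def snd4 (k : Fin 4) : Fin 2 := ⟨k.val % 2, by omega⟩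

/-- Kronecker product of two `2 × 2` real matrices as a `4 × 4` matrix. -/
def kron4 (A B : Matrix (Fin 2) (Fin 2) ℝ) : Matrix (Fin 4) (Fin 4) ℝ :=
  Matrix.of fun r c => A (fst4 r) (fst4 c) * B (snd4 r) (snd4 c)

/-- Bottom-right `3 × 3` submatrix of a `4 × 4` matrix. -/
def sub3 (M : Matrix (Fin 4) (Fin 4) ℝ) : Matrix (Fin 3) (Fin 3) ℝ :=
  Matrix.of fun i j => M i.succ j.succ

noncomputable def A2 : Matrix (Fin 2) (Fin 2) ℝ := !![1, 1; -1, 1]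

lemma kron4_smul (c d : ℝ) (A B : Matrix (Fin 2) (Fin 2) ℝ) :
    kron4 (c • A) (d • B) = (c * d) • kron4 A B := by
  ext i j
  simp [kron4, Matrix.smul_apply]
  ring

lemma h_eq : h = (Real.sqrt 2)⁻¹ • A2 := rfl

lemma hT_eq : hᵀ = (Real.sqrt 2)⁻¹ • A2ᵀ := by
  rw [h_eq, Matrix.transpose_smul]

lemma sqrt2_sq : (Real.sqrt 2)⁻¹ * (Real.sqrt 2)⁻¹ = 2⁻¹ := by
  rw [← mul_inv, Real.mul_self_sqrt (by norm_num : (0:ℝ) ≤ 2)]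

lemma sub3_smul (c : ℝ) (M : Matrix (Fin 4) (Fin 4) ℝ) :
    sub3 (c • M) = c • sub3 M := rfl

/-- Evaluating the squangle on the diagonal matrix `diag(x,y,z,w)` (the `12|34`
flattening of a clipped tensor from quartet `13|24`) gives
`(1/4)(wyz + xyz + wxy + wxz)`; this is positive when `x,y,z,w > 0`. -/
theorem squangle_on_diag (x y z w : ℝ) :
    (sub3 (kron4 hᵀ hᵀ * Matrix.diagonal ![x, y, z, w] * kron4 h h)).det =
      (1 / 4) * (w * y * z + x * y * z + w * x * y + w * x * z) ∧
    (0 < x → 0 < y → 0 < z → 0 < w →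
      0 < (sub3 (kron4 hᵀ hᵀ * Matrix.diagonal ![x, y, z, w] * kron4 h h)).det) := by
  have key : (sub3 (kron4 hᵀ hᵀ * Matrix.diagonal ![x, y, z, w] * kron4 h h)).det =
      (1 / 4) * (w * y * z + x * y * z + w * x * y + w * x * z) := by
    rw [hT_eq, h_eq, kron4_smul, kron4_smul, sqrt2_sq,
      Matrix.smul_mul, Matrix.mul_smul, Matrix.smul_mul, smul_smul, sub3_smul,
      Matrix.det_smul]
    have hK : kron4 A2 A2 = !![1,1,1,1;-1,1,-1,1;-1,-1,1,1;1,-1,-1,1] := by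
      ext i j
      fin_cases i <;> fin_cases j <;> norm_num [kron4, fst4, snd4, A2]
    have hKT : kron4 A2ᵀ A2ᵀ = !![1,-1,-1,1;1,1,-1,-1;1,-1,1,-1;1,1,1,1] := by
      ext i j
      fin_cases i <;> fin_cases j <;> norm_num [kron4, fst4, snd4, A2]
    have hN : (sub3 (kron4 A2ᵀ A2ᵀ * Matrix.diagonal ![x, y, z, w] * kron4 A2 A2)).det =
        16 * (w * y * z + x * y * z + w * x * y + w * x * z) := by
      rw [hK, hKT, Matrix.det_fin_three]
      norm_num [sub3, Matrix.mul_apply, Matrix.vecMul, dotProduct, Matrix.vecHead, Matrix.vecTail, Matrix.diagonal_apply, Fin.sum_univ_four, Fin.succ]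
      simp only [Matrix.cons_val, Matrix.cons_val_zero, Matrix.cons_val_one, Matrix.cons_val_succ]
      ring
    rw [hN]
    norm_num [Fintype.card_fin]
    ring
  refine ⟨key, fun hx hy hz hw => ?_⟩
  rw [key]; positivity
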